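/- The action map G × X → X is continuous when X is equipped with the topology τ generated by the basis {U · x : U ⊆ G open, x ∈ X}. -/

import Mathlib

open TopologicalSpace

theorem action_continuous_in_tau {G X : Type*} [Group G] [TopologicalSpace G]
    [IsTopologicalGroup G] [MulAction G X] :
    letI : TopologicalSpace X :=
      generateFrom {s : Set X | ∃ (U : Set G) (x : X), IsOpen U ∧ s = (· • x) '' U}
    Continuous (fun p : G × X => p.1 • p.2) := by
  letI : TopologicalSpace X :=
    generateFrom {s : Set X | ∃ (U : Set G) (x : X), IsOpen U ∧ s = (· • x) '' U}
  rw [continuous_generateFrom_iff]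
  rintro s ⟨U, x, hU, rfl⟩
  rw [isOpen_prod_iff]
  rintro g y hy
  simp only [Set.mem_preimage, Set.mem_image] at hy
  obtain ⟨u, hu, huy⟩ := hy
  -- y = (g⁻¹ * u) • x
  have hyx : y = (g⁻¹ * u) • x := by
    rw [mul_smul, huy, inv_smul_smul]
  -- use continuity of multiplication at (g, g⁻¹ * u)
  have hmul : IsOpen ((fun p : G × G => p.1 * p.2) ⁻¹' U) :=
    hU.preimage continuous_mul
  have hmem : (g, g⁻¹ * u) ∈ (fun p : G × G => p.1 * p.2) ⁻¹' U := by
    simp [hu]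
  obtain ⟨A, B, hA, hB, hgA, hvB, hAB⟩ := isOpen_prod_iff.mp hmul g (g⁻¹ * u) hmem
  refine ⟨A, (· • x) '' B, hA, ?_, hgA, ⟨g⁻¹ * u, hvB, hyx.symm⟩, ?_⟩
  · exact GenerateOpen.basic _ ⟨B, x, hB, rfl⟩
  · rintro ⟨g', y'⟩ ⟨hg', b, hb, rfl⟩
    exact ⟨g' * b, hAB (Set.mk_mem_prod hg' hb), mul_smul g' b x⟩
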